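/- arXiv:2210.05761 — 2 statements merged into one kernel-verified Lean document; each statement's English description precedes it below -/
import Mathlib

section
/- Let (H, 𝒰, ℰ, 𝒥, σ) be a Z-problem with dim H < ∞ such that the compression of σ to 𝒰 ⊕ ℰ is self-adjoint (σ₀₀* = σ₀₀, σ₁₁* = σ₁₁, σ₀₁* = σ₁₀), ker σ₁₁ ⊆ ker σ₀₁, and σ₁₁ ≥ 0. Set σ⁎ = σ₀₀ − σ₀₁σ₁₁⁺σ₁₀. Then σ⁎ is self-adjoint, for every E₀ ∈ 𝒰 the quantity ⟨E₀, σ⁎E₀⟩ equals the minimum over E ∈ ℰ of ⟨E₀ + E, σ(E₀ + E)⟩ (these inner products are real), the set of minimizers is exactly { −σ₁₁⁺σ₁₀E₀ + K : K ∈ ker σ₁₁ }, and σ⁎ ≤ σ₀₀. -/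
/-- The generalized Schur complement `σ₀₀ - σ₀₁ σ₁₁⁺ σ₁₀` of an operator `σ` with respect
to orthogonal projections `P0, P1`, where `B` is the Moore–Penrose pseudoinverse of the
block `σ₁₁ = P1 σ P1`. -/
noncomputable def gschurLM {𝕂 : Type*} [RCLike 𝕂] {H : Type*} [NormedAddCommGroup H]
    [InnerProductSpace 𝕂 H] (P0 P1 σ B : H →ₗ[𝕂] H) : H →ₗ[𝕂] H :=
  (P0 ∘ₗ (σ ∘ₗ P0)) - (P0 ∘ₗ (σ ∘ₗ P1)) ∘ₗ (B ∘ₗ (P1 ∘ₗ (σ ∘ₗ P0)))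

/-- If `A` is a symmetric positive operator and `re ⟪F, A F⟫ = 0` then `A F = 0`. -/
private lemma zq_aux {𝕂 : Type*} [RCLike 𝕂] {H : Type*} [NormedAddCommGroup H]
    [InnerProductSpace 𝕂 H] [FiniteDimensional 𝕂 H] (A : H →ₗ[𝕂] H)
    (hsa : ∀ x y : H, (inner 𝕂 (A x) y : 𝕂) = inner 𝕂 x (A y))
    (hpos : ∀ x : H, 0 ≤ RCLike.re (inner 𝕂 x (A x) : 𝕂))
    (F : H) (hF : RCLike.re (inner 𝕂 F (A F) : 𝕂) = 0) : A F = 0 := by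
  by_contra hne
  have hN : (0:ℝ) < ‖A F‖ ^ 2 := pow_pos (norm_pos_iff.mpr hne) 2
  have hc0 : 0 ≤ RCLike.re (inner 𝕂 (A F) (A (A F)) : 𝕂) := hpos _
  set c := RCLike.re (inner 𝕂 (A F) (A (A F)) : 𝕂) with hcdef
  have hFw : RCLike.re (inner 𝕂 F (A (A F)) : 𝕂) = ‖A F‖ ^ 2 := by
    rw [← hsa F (A F), inner_self_eq_norm_sq]
  have hq : ∀ t : ℝ, 0 ≤ t ^ 2 * c + 2 * t * ‖A F‖ ^ 2 := by
    intro t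
    have h := hpos (F + ((t : ℝ) : 𝕂) • A F)
    simp only [map_add, map_smul, inner_add_left, inner_add_right, inner_smul_left,
      inner_smul_right, RCLike.conj_ofReal, map_add, RCLike.re_ofReal_mul, inner_self_eq_norm_sq,
      hF, hFw] at h
    rw [← hcdef] at h
    nlinarith [h]
  have h3 : ∀ t : ℝ, 0 < t → 2 * ‖A F‖ ^ 2 ≤ t * c := by
    intro t ht
    have h := hq (-t)
    nlinarith [h]
  have hc1 : (0:ℝ) < c + 1 := by linarith
  have h4 := h3 (‖A F‖ ^ 2 / (c + 1)) (div_pos hN hc1)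
  have h5 : ‖A F‖ ^ 2 / (c + 1) * c ≤ ‖A F‖ ^ 2 := by
    rw [div_mul_eq_mul_div, div_le_iff₀ hc1]
    nlinarith [hN]
  linarith

/-- Generalized Dirichlet minimization principle for a Z-problem
`(H, 𝒰, ℰ, 𝒥, σ)` on a finite-dimensional Hilbert space (encoded by mutually orthogonal
projections `P0, P1, P2` with sum `1` and ranges `𝒰, ℰ, 𝒥`): if the compression of `σ` to
`𝒰 ⊕ ℰ` is self-adjoint, `ker σ₁₁ ⊆ ker σ₀₁` and `σ₁₁ ≥ 0`, then with `B = σ₁₁⁺` and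
`σ⁎ = σ₀₀ - σ₀₁σ₁₁⁺σ₁₀`: `σ⁎` is self-adjoint, `⟨E₀, σ⁎E₀⟩` is the minimum of
`⟨E₀+E, σ(E₀+E)⟩` over `E ∈ ℰ`, the set of minimizers is
`{-σ₁₁⁺σ₁₀E₀ + K : K ∈ ker σ₁₁}`, and `σ⁎ ≤ σ₀₀`. -/
theorem stmt_12
    {𝕂 : Type*} [RCLike 𝕂]
    {H : Type*} [NormedAddCommGroup H] [InnerProductSpace 𝕂 H] [FiniteDimensional 𝕂 H]
    (P0 P1 P2 : H →ₗ[𝕂] H)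
    (hP0 : P0 ∘ₗ P0 = P0) (hP0sa : LinearMap.adjoint P0 = P0)
    (hP1 : P1 ∘ₗ P1 = P1) (hP1sa : LinearMap.adjoint P1 = P1)
    (hP2 : P2 ∘ₗ P2 = P2) (hP2sa : LinearMap.adjoint P2 = P2)
    (h01 : P0 ∘ₗ P1 = 0) (h02 : P0 ∘ₗ P2 = 0) (h12 : P1 ∘ₗ P2 = 0)
    (hsum : P0 + P1 + P2 = 1)
    (σ : H →ₗ[𝕂] H)
    (hσ00 : LinearMap.adjoint (P0 ∘ₗ (σ ∘ₗ P0)) = P0 ∘ₗ (σ ∘ₗ P0))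
    (hσ11 : LinearMap.adjoint (P1 ∘ₗ (σ ∘ₗ P1)) = P1 ∘ₗ (σ ∘ₗ P1))
    (hσ01 : LinearMap.adjoint (P0 ∘ₗ (σ ∘ₗ P1)) = P1 ∘ₗ (σ ∘ₗ P0))
    (hker : LinearMap.ker (P1 ∘ₗ (σ ∘ₗ P1)) ≤ LinearMap.ker (P0 ∘ₗ (σ ∘ₗ P1)))
    (hpos11 : ∀ x : H, 0 ≤ RCLike.re (inner 𝕂 x ((P1 ∘ₗ (σ ∘ₗ P1)) x) : 𝕂))
    (B : H →ₗ[𝕂] H)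
    (hB1 : B ∘ₗ ((P1 ∘ₗ (σ ∘ₗ P1)) ∘ₗ B) = B)
    (hB2 : (P1 ∘ₗ (σ ∘ₗ P1)) ∘ₗ (B ∘ₗ (P1 ∘ₗ (σ ∘ₗ P1))) = P1 ∘ₗ (σ ∘ₗ P1))
    (hB3 : LinearMap.adjoint (B ∘ₗ (P1 ∘ₗ (σ ∘ₗ P1))) = B ∘ₗ (P1 ∘ₗ (σ ∘ₗ P1)))
    (hB4 : LinearMap.adjoint ((P1 ∘ₗ (σ ∘ₗ P1)) ∘ₗ B) = (P1 ∘ₗ (σ ∘ₗ P1)) ∘ₗ B) :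
    LinearMap.adjoint (gschurLM P0 P1 σ B) = gschurLM P0 P1 σ B ∧
    (∀ E₀ : H, P0 E₀ = E₀ →
      IsLeast {r : ℝ | ∃ E : H, P1 E = E ∧ r = RCLike.re (inner 𝕂 (E₀ + E) (σ (E₀ + E)) : 𝕂)}
        (RCLike.re (inner 𝕂 E₀ (gschurLM P0 P1 σ B E₀) : 𝕂)) ∧
      (∀ E : H, P1 E = E →
        (RCLike.re (inner 𝕂 (E₀ + E) (σ (E₀ + E)) : 𝕂) =
            RCLike.re (inner 𝕂 E₀ (gschurLM P0 P1 σ B E₀) : 𝕂) ↔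
          ∃ K : H, P1 K = K ∧ (P1 ∘ₗ (σ ∘ₗ P1)) K = 0 ∧
            E = -(B ((P1 ∘ₗ (σ ∘ₗ P0)) E₀)) + K))) ∧
    (∀ z : H, RCLike.re (inner 𝕂 z (gschurLM P0 P1 σ B z) : 𝕂) ≤
      RCLike.re (inner 𝕂 z ((P0 ∘ₗ (σ ∘ₗ P0)) z) : 𝕂)) := by
  -- scalar (pointwise) self-adjointness facts
  have hP0i : ∀ x y : H, (inner 𝕂 (P0 x) y : 𝕂) = inner 𝕂 x (P0 y) := fun x y => by
    have h := LinearMap.adjoint_inner_right P0 x y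
    rw [hP0sa] at h; exact h.symm
  have hP1i : ∀ x y : H, (inner 𝕂 (P1 x) y : 𝕂) = inner 𝕂 x (P1 y) := fun x y => by
    have h := LinearMap.adjoint_inner_right P1 x y
    rw [hP1sa] at h; exact h.symm
  have hAi : ∀ x y : H, (inner 𝕂 (P1 (σ (P1 x))) y : 𝕂) = inner 𝕂 x (P1 (σ (P1 y))) := fun x y => by
    have h := LinearMap.adjoint_inner_right (P1 ∘ₗ (σ ∘ₗ P1)) x y
    rw [hσ11] at h; exact h.symm
  have hS10i : ∀ x y : H, (inner 𝕂 x (P0 (σ (P1 y))) : 𝕂) = inner 𝕂 (P1 (σ (P0 x))) y := fun x y => by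
    have h := LinearMap.adjoint_inner_left (P0 ∘ₗ (σ ∘ₗ P1)) y x
    rw [hσ01] at h; exact h.symm
  have hS01left : ∀ u y : H, (inner 𝕂 (P0 (σ (P1 u))) y : 𝕂) = inner 𝕂 u (P1 (σ (P0 y))) :=
    fun u y => by
    have h := LinearMap.adjoint_inner_right (P0 ∘ₗ (σ ∘ₗ P1)) u y
    rw [hσ01] at h; exact h.symm
  have hposA : ∀ x : H, 0 ≤ RCLike.re (inner 𝕂 x (P1 (σ (P1 x))) : 𝕂) := fun x => hpos11 x
  -- operator identities
  have hABA : ((P1 ∘ₗ (σ ∘ₗ P1)) ∘ₗ B) ∘ₗ (P1 ∘ₗ (σ ∘ₗ P1)) = P1 ∘ₗ (σ ∘ₗ P1) := by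
    rw [LinearMap.comp_assoc]; exact hB2
  have hA2B : (P1 ∘ₗ (σ ∘ₗ P1)) ∘ₗ ((P1 ∘ₗ (σ ∘ₗ P1)) ∘ₗ B) = P1 ∘ₗ (σ ∘ₗ P1) := by
    have h := congrArg LinearMap.adjoint hABA
    rw [LinearMap.adjoint_comp ((P1 ∘ₗ (σ ∘ₗ P1)) ∘ₗ B) (P1 ∘ₗ (σ ∘ₗ P1)), hB4, hσ11] at h
    exact h
  have hS01AB : (P0 ∘ₗ (σ ∘ₗ P1)) ∘ₗ ((P1 ∘ₗ (σ ∘ₗ P1)) ∘ₗ B) = P0 ∘ₗ (σ ∘ₗ P1) := by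
    apply LinearMap.ext; intro x
    have hk : x - (P1 ∘ₗ (σ ∘ₗ P1)) (B x) ∈ LinearMap.ker (P1 ∘ₗ (σ ∘ₗ P1)) := by
      rw [LinearMap.mem_ker, map_sub, sub_eq_zero]
      exact (LinearMap.ext_iff.mp hA2B x).symm
    have h2 := hker hk
    rw [LinearMap.mem_ker, map_sub, sub_eq_zero] at h2
    exact h2.symm
  have hABS10 : ((P1 ∘ₗ (σ ∘ₗ P1)) ∘ₗ B) ∘ₗ (P1 ∘ₗ (σ ∘ₗ P0)) = P1 ∘ₗ (σ ∘ₗ P0) := by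
    have h := congrArg LinearMap.adjoint hS01AB
    rw [LinearMap.adjoint_comp (P0 ∘ₗ (σ ∘ₗ P1)) ((P1 ∘ₗ (σ ∘ₗ P1)) ∘ₗ B), hB4, hσ01] at h
    exact h
  have hS01BA : (P0 ∘ₗ (σ ∘ₗ P1)) ∘ₗ (B ∘ₗ (P1 ∘ₗ (σ ∘ₗ P1))) = P0 ∘ₗ (σ ∘ₗ P1) := by
    apply LinearMap.ext; intro x
    have hk : x - B ((P1 ∘ₗ (σ ∘ₗ P1)) x) ∈ LinearMap.ker (P1 ∘ₗ (σ ∘ₗ P1)) := by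
      rw [LinearMap.mem_ker, map_sub, sub_eq_zero]
      exact (LinearMap.ext_iff.mp hB2 x).symm
    have h2 := hker hk
    rw [LinearMap.mem_ker, map_sub, sub_eq_zero] at h2
    exact h2.symm
  have hBAS10 : (B ∘ₗ (P1 ∘ₗ (σ ∘ₗ P1))) ∘ₗ (P1 ∘ₗ (σ ∘ₗ P0)) = P1 ∘ₗ (σ ∘ₗ P0) := by
    have h := congrArg LinearMap.adjoint hS01BA
    rw [LinearMap.adjoint_comp (P0 ∘ₗ (σ ∘ₗ P1)) (B ∘ₗ (P1 ∘ₗ (σ ∘ₗ P1))), hB3, hσ01] at h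
    exact h
  have cAB : ∀ x : H, P1 (σ (P1 (B (P1 (σ (P0 x)))))) = P1 (σ (P0 x)) := fun x =>
    LinearMap.ext_iff.mp hABS10 x
  -- P1 ∘ B = B
  have hP1A : P1 ∘ₗ (P1 ∘ₗ (σ ∘ₗ P1)) = P1 ∘ₗ (σ ∘ₗ P1) := by
    rw [← LinearMap.comp_assoc, hP1]
  have hBA : B ∘ₗ (P1 ∘ₗ (σ ∘ₗ P1)) = (P1 ∘ₗ (σ ∘ₗ P1)) ∘ₗ LinearMap.adjoint B := by
    rw [← hB3, LinearMap.adjoint_comp B (P1 ∘ₗ (σ ∘ₗ P1)), hσ11]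
  have hBexp : B = (P1 ∘ₗ (σ ∘ₗ P1)) ∘ₗ (LinearMap.adjoint B ∘ₗ B) := by
    conv_lhs => rw [← hB1, ← LinearMap.comp_assoc, hBA, LinearMap.comp_assoc]
  have hP1B : P1 ∘ₗ B = B := by
    conv_lhs => rw [hBexp, ← LinearMap.comp_assoc, hP1A]
    exact hBexp.symm
  have cP1B : ∀ x : H, P1 (B x) = B x := fun x => LinearMap.ext_iff.mp hP1B x
  -- self-adjointness of the Schur complement correction term
  have hTsa : LinearMap.adjoint ((P0 ∘ₗ (σ ∘ₗ P1)) ∘ₗ (B ∘ₗ (P1 ∘ₗ (σ ∘ₗ P0)))) =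
      (P0 ∘ₗ (σ ∘ₗ P1)) ∘ₗ (B ∘ₗ (P1 ∘ₗ (σ ∘ₗ P0))) := by
    have hpt : ∀ x y : H,
        (inner 𝕂 (((P0 ∘ₗ (σ ∘ₗ P1)) ∘ₗ (B ∘ₗ (P1 ∘ₗ (σ ∘ₗ P0)))) x) y : 𝕂) =
          inner 𝕂 x (((P0 ∘ₗ (σ ∘ₗ P1)) ∘ₗ (B ∘ₗ (P1 ∘ₗ (σ ∘ₗ P0)))) y) := by
      intro x y
      show (inner 𝕂 (P0 (σ (P1 (B (P1 (σ (P0 x))))))) y : 𝕂) =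
        inner 𝕂 x (P0 (σ (P1 (B (P1 (σ (P0 y)))))))
      rw [hS01left, hS10i]
      -- ⟪B (P1 (σ (P0 x))), P1 (σ (P0 y))⟫ = ⟪P1 (σ (P0 x)), B (P1 (σ (P0 y)))⟫
      nth_rewrite 1 [← cAB y]
      rw [← hAi, cAB x]
    exact ((LinearMap.eq_adjoint_iff _ _).mpr hpt).symm
  -- value of the Schur complement quadratic form
  have gval : ∀ z : H, RCLike.re (inner 𝕂 z (gschurLM P0 P1 σ B z) : 𝕂) =
      RCLike.re (inner 𝕂 z (P0 (σ (P0 z))) : 𝕂) -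
        RCLike.re (inner 𝕂 (P1 (σ (P0 z))) (B (P1 (σ (P0 z)))) : 𝕂) := by
    intro z
    have e : (inner 𝕂 z (gschurLM P0 P1 σ B z) : 𝕂) =
        inner 𝕂 z (P0 (σ (P0 z))) - inner 𝕂 (P1 (σ (P0 z))) (B (P1 (σ (P0 z)))) := by
      show (inner 𝕂 z ((((P0 ∘ₗ (σ ∘ₗ P0)) - (P0 ∘ₗ (σ ∘ₗ P1)) ∘ₗ (B ∘ₗ (P1 ∘ₗ (σ ∘ₗ P0))))) z) : 𝕂)
        = _
      rw [LinearMap.sub_apply, inner_sub_right]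
      show (inner 𝕂 z (P0 (σ (P0 z))) : 𝕂) - inner 𝕂 z (P0 (σ (P1 (B (P1 (σ (P0 z))))))) = _
      rw [hS10i]
    rw [e, map_sub]
  -- zero lemma
  have hzero : ∀ F : H, RCLike.re (inner 𝕂 F (P1 (σ (P1 F))) : 𝕂) = 0 → P1 (σ (P1 F)) = 0 := by
    intro F hF
    exact zq_aux (P1 ∘ₗ (σ ∘ₗ P1)) hAi hposA F hF
  -- the key quadratic identity
  have key : ∀ E₀ E : H, P0 E₀ = E₀ → P1 E = E →
      RCLike.re (inner 𝕂 (E₀ + E) (σ (E₀ + E)) : 𝕂)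
        = RCLike.re (inner 𝕂 E₀ (gschurLM P0 P1 σ B E₀) : 𝕂)
          + RCLike.re (inner 𝕂 (E + B (P1 (σ (P0 E₀))))
              (P1 (σ (P1 (E + B (P1 (σ (P0 E₀))))))) : 𝕂) := by
    intro E₀ E h0 h1e
    have hg := gval E₀
    have hAc := cAB E₀
    have ht2 := hS10i E₀ E
    have hd : (inner 𝕂 (E₀ + E) (σ (E₀ + E)) : 𝕂)
        = inner 𝕂 E₀ (P0 (σ (P0 E₀))) + inner 𝕂 E₀ (P0 (σ (P1 E)))
          + inner 𝕂 E (P1 (σ (P0 E₀))) + inner 𝕂 E (P1 (σ (P1 E))) := by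
      conv_lhs => rw [← h0, ← h1e]
      simp only [map_add, inner_add_left, inner_add_right, hP0i, hP1i]
      ring
    set b := P1 (σ (P0 E₀)) with hbdef
    set c := B b with hcdef
    have hq : (inner 𝕂 (E + c) (P1 (σ (P1 (E + c)))) : 𝕂)
        = inner 𝕂 E (P1 (σ (P1 E))) + inner 𝕂 E b + inner 𝕂 b E + inner 𝕂 c b := by
      have h2 : (inner 𝕂 c (P1 (σ (P1 E))) : 𝕂) = inner 𝕂 b E := by
        rw [← hAi c E, hAc]
      have h3 : P1 (σ (P1 (E + c))) = P1 (σ (P1 E)) + b := by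
        simp only [map_add, hAc]
      rw [h3, inner_add_left, inner_add_right, inner_add_right, h2]
      ring
    rw [hd, hg, ht2, hq]
    simp only [map_add, map_sub]
    have s2 := inner_re_symm (𝕜 := 𝕂) c b
    linarith
  refine ⟨?_, ?_, ?_⟩
  · -- self-adjointness
    unfold gschurLM
    rw [map_sub, hσ00, hTsa]
  · -- minimization
    intro E₀ h0
    constructor
    · constructor
      · -- membership
        refine ⟨-(B (P1 (σ (P0 E₀)))), ?_, ?_⟩
        · simp [cP1B]
        · have hE : P1 (-(B (P1 (σ (P0 E₀))))) = -(B (P1 (σ (P0 E₀)))) := by simp [cP1B]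
          rw [key E₀ _ h0 hE]
          have hz : -(B (P1 (σ (P0 E₀)))) + B (P1 (σ (P0 E₀))) = 0 := neg_add_cancel _
          rw [hz]
          simp
      · -- lower bound
        rintro r ⟨E, hE, rfl⟩
        rw [key E₀ E h0 hE]
        have := hposA (E + B (P1 (σ (P0 E₀))))
        linarith
    · -- minimizers
      intro E hE
      rw [key E₀ E h0 hE]
      constructor
      · intro h
        have h0' : RCLike.re (inner 𝕂 (E + B (P1 (σ (P0 E₀))))
            (P1 (σ (P1 (E + B (P1 (σ (P0 E₀))))))) : 𝕂) = 0 := by linarith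
        have hFA := hzero _ h0'
        refine ⟨E + B (P1 (σ (P0 E₀))), ?_, hFA, ?_⟩
        swap
        · show E = -(B (P1 (σ (P0 E₀)))) + (E + B (P1 (σ (P0 E₀))))
          abel
        simp [map_add, hE, cP1B]
      · rintro ⟨K, hK, hAK, rfl⟩
        have hsimp : -(B (P1 (σ (P0 E₀)))) + K + B (P1 (σ (P0 E₀))) = K := by abel
        simp only [LinearMap.comp_apply]
        rw [hsimp]
        have hAK' : P1 (σ (P1 K)) = 0 := hAK
        rw [hAK']
        simp
  · -- σ⁎ ≤ σ₀₀
    intro z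
    have h2 := hAi (B (P1 (σ (P0 z)))) (B (P1 (σ (P0 z))))
    nth_rewrite 1 [cAB z] at h2
    have h3 : 0 ≤ RCLike.re (inner 𝕂 (P1 (σ (P0 z))) (B (P1 (σ (P0 z)))) : 𝕂) := by
      rw [h2]; exact hposA _
    have h4 := gval z
    have h5 : RCLike.re (inner 𝕂 z ((P0 ∘ₗ (σ ∘ₗ P0)) z) : 𝕂) =
        RCLike.re (inner 𝕂 z (P0 (σ (P0 z))) : 𝕂) := rfl
    rw [h4, h5]
    linarith
end

section
/- Let (H, 𝒰, ℰ, 𝒥, σ) be a Z-problem with dim H < ∞, σ self-adjoint, and suppose: (b) ker σ₁₁ ⊆ ker σ₀₁ ∩ ker σ₂₁; (c) every x₀ + x₂ with x₀ ∈ 𝒰, x₂ ∈ 𝒥 that is annihilated by all four generalized Schur-complement blocks, i.e. (σ₀₀ − σ₀₁σ₁₁⁺σ₁₀)x₀ + (σ₀₂ − σ₀₁σ₁₁⁺σ₁₂)x₂ = 0 and (σ₂₀ − σ₂₁σ₁₁⁺σ₁₀)x₀ + (σ₂₂ − σ₂₁σ₁₁⁺σ₁₂)x₂ = 0, also satisfies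 σ₁₀x₀ + σ₁₂x₂ = 0; (d) ker (σ⁺)₂₂ ⊆ ker (σ⁺)₀₂; and (e) ker((σ⁺)₀₀ − (σ⁺)₀₂((σ⁺)₂₂)⁺(σ⁺)₂₀) ⊆ ker (σ⁺)₂₀. Then (σ⁺)₀₀ − (σ⁺)₀₂((σ⁺)₂₂)⁺(σ⁺)₂₀ = (σ₀₀ − σ₀₁σ₁₁⁺σ₁₀)⁺, i.e. the dual effective operator computed from σ⁺ is the Moore–Penrose pseudoinverse of the effective operator computed from σ. -/
section ZProblemAux

open LinearMap

variable {𝕂 : Type*} [RCLike 𝕂] {H : Type*} [NormedAddCommGroup H]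
    [InnerProductSpace 𝕂 H] [FiniteDimensional 𝕂 H]

/-- Every linear operator on a finite-dimensional inner product space has a
Moore–Penrose pseudoinverse (adjoint form). -/
lemma exists_pinv_adj (T : H →ₗ[𝕂] H) : ∃ X : H →ₗ[𝕂] H,
    T * X * T = T ∧ X * T * X = X ∧
      LinearMap.adjoint (T * X) = T * X ∧ LinearMap.adjoint (X * T) = X * T := by
  classical
  set K : Submodule 𝕂 H := (LinearMap.ker T)ᗮ with hK
  set R : Submodule 𝕂 H := LinearMap.range T with hR
  have hmem : ∀ c : K, T ↑c ∈ R := fun c => LinearMap.mem_range_self T ↑c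
  set e : K →ₗ[𝕂] R := (T.domRestrict K).codRestrict R hmem with he
  have hecoe : ∀ k : K, (e k : H) = T ↑k := fun _ => rfl
  have hTprojK : ∀ v : H, T ((K.orthogonalProjection v : H)) = T v := by
    intro v
    have h1 : v - ↑(K.orthogonalProjection v) ∈ Kᗮ :=
      Submodule.sub_starProjection_mem_orthogonal (K := K) v
    have h2 : Kᗮ = LinearMap.ker T := by
      rw [hK, Submodule.orthogonal_orthogonal]
    rw [h2, LinearMap.mem_ker, map_sub, sub_eq_zero] at h1
    exact h1.symm
  have hinj : Function.Injective e := by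
    intro a b hab
    have h : T ↑a = T ↑b := by rw [← hecoe, ← hecoe, hab]
    have hker : (↑a - ↑b : H) ∈ LinearMap.ker T := by
      rw [LinearMap.mem_ker, map_sub, sub_eq_zero]; exact h
    have hKmem : (↑a - ↑b : H) ∈ K := Submodule.sub_mem K a.2 b.2
    have : (↑a - ↑b : H) = 0 := by
      have h0 : (inner 𝕂 (↑a - ↑b : H) (↑a - ↑b : H) : 𝕂) = 0 :=
        (Submodule.mem_orthogonal (LinearMap.ker T) _).1 hKmem _ hker
      exact inner_self_eq_zero.mp h0
    exact Subtype.ext (sub_eq_zero.mp this)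
  have hsurj : Function.Surjective e := by
    rintro ⟨y, hy⟩
    obtain ⟨v, rfl⟩ := hy
    refine ⟨K.orthogonalProjection v, ?_⟩
    apply Subtype.ext
    rw [hecoe]
    exact hTprojK v
  set eq := LinearEquiv.ofBijective e ⟨hinj, hsurj⟩ with heq
  set X : H →ₗ[𝕂] H :=
    K.subtype ∘ₗ (eq.symm : R →ₗ[𝕂] K) ∘ₗ
      ((R.orthogonalProjection).toLinearMap) with hX
  have hXv : ∀ v : H, X v = ↑(eq.symm (R.orthogonalProjection v)) := fun _ => rfl
  have hTX : ∀ v : H, T (X v) = ↑(R.orthogonalProjection v) := by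
    intro v
    rw [hXv]
    have : T ↑(eq.symm (R.orthogonalProjection v))
        = ↑(e (eq.symm (R.orthogonalProjection v))) := rfl
    rw [this]
    congr 1
    exact eq.apply_symm_apply _
  have hXT : ∀ v : H, X (T v) = ↑(K.orthogonalProjection v) := by
    intro v
    rw [hXv]
    have h1 : R.orthogonalProjection (T v) = ⟨T v, LinearMap.mem_range_self T v⟩ :=
      Submodule.orthogonalProjection_mem_subspace_eq_self (⟨T v, LinearMap.mem_range_self T v⟩ : R)
    rw [h1]
    have h2 : e (K.orthogonalProjection v) = ⟨T v, LinearMap.mem_range_self T v⟩ := by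
      apply Subtype.ext; rw [hecoe]; exact hTprojK v
    have h3 : eq (K.orthogonalProjection v) = ⟨T v, LinearMap.mem_range_self T v⟩ := h2
    rw [← h3, eq.symm_apply_apply]
  refine ⟨X, ?_, ?_, ?_, ?_⟩
  · ext v
    simp only [Module.End.mul_apply]
    rw [hXT, hTprojK]
  · ext v
    simp only [Module.End.mul_apply]
    rw [hTX, hXv, hXv]
    congr 1
    congr 1
    exact Submodule.orthogonalProjection_mem_subspace_eq_self _
  · refine ((LinearMap.eq_adjoint_iff _ _).2 ?_).symm
    intro x y
    simp only [Module.End.mul_apply]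
    rw [hTX, hTX]
    exact Submodule.inner_starProjection_left_eq_right R x y
  · refine ((LinearMap.eq_adjoint_iff _ _).2 ?_).symm
    intro x y
    simp only [Module.End.mul_apply]
    rw [hXT, hXT]
    exact Submodule.inner_starProjection_left_eq_right K x y

/-- Existence of the Moore–Penrose pseudoinverse, star form. -/
lemma exists_pinv (T : H →ₗ[𝕂] H) : ∃ X : H →ₗ[𝕂] H,
    T * X * T = T ∧ X * T * X = X ∧ star (T * X) = T * X ∧ star (X * T) = X * T := by
  obtain ⟨X, h1, h2, h3, h4⟩ := exists_pinv_adj T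
  exact ⟨X, h1, h2, by rw [LinearMap.star_eq_adjoint]; exact h3,
    by rw [LinearMap.star_eq_adjoint]; exact h4⟩

lemma pinv_unique {A X Y : H →ₗ[𝕂] H}
    (hX1 : A*X*A = A) (hX2 : X*A*X = X) (hX3 : star (A*X) = A*X) (hX4 : star (X*A) = X*A)
    (hY1 : A*Y*A = A) (hY2 : Y*A*Y = Y) (hY3 : star (A*Y) = A*Y) (hY4 : star (Y*A) = Y*A) :
    X = Y := by
  have h1 : A*X = A*Y := by
    calc A*X = star (A*X) := hX3.symm
      _ = star ((A*Y)*(A*X)) := by rw [show (A*Y)*(A*X) = (A*Y*A)*X by noncomm_ring, hY1]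
      _ = star (A*X) * star (A*Y) := by rw [star_mul]
      _ = (A*X)*(A*Y) := by rw [hX3, hY3]
      _ = (A*X*A)*Y := by noncomm_ring
      _ = A*Y := by rw [hX1]
  have h2 : X*A = Y*A := by
    calc X*A = star (X*A) := hX4.symm
      _ = star ((X*A)*(Y*A)) := by rw [show (X*A)*(Y*A) = X*(A*Y*A) by noncomm_ring, hY1]
      _ = star (Y*A) * star (X*A) := by rw [star_mul]
      _ = (Y*A)*(X*A) := by rw [hX4, hY4]
      _ = Y*(A*X*A) := by noncomm_ring
      _ = Y*A := by rw [hX1]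
  calc X = X*A*X := hX2.symm
    _ = (Y*A)*X := by rw [h2]
    _ = Y*(A*X) := by rw [mul_assoc]
    _ = Y*(A*Y) := by rw [h1]
    _ = Y*A*Y := by rw [mul_assoc]
    _ = Y := hY2

lemma star_pinv {A X : H →ₗ[𝕂] H} (hA : star A = A)
    (h1 : A*X*A = A) (h2 : X*A*X = X) (h3 : star (A*X) = A*X) (h4 : star (X*A) = X*A) :
    star X = X := by
  have s1 : A*(star X)*A = A := by
    have e : star (A*X*A) = A*(star X)*A := by
      simp only [star_mul, hA, mul_assoc]
    rw [← e, h1, hA]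
  have s2 : (star X)*A*(star X) = star X := by
    have e : star (X*A*X) = (star X)*A*(star X) := by
      simp only [star_mul, hA, mul_assoc]
    rw [← e, h2]
  have e2 : A * star X = X*A := by
    have e1 : A * star X = star (X*A) := by rw [star_mul, hA]
    exact e1.trans h4
  have e4 : star X * A = A*X := by
    have e3 : star X * A = star (A*X) := by rw [star_mul, hA]
    exact e3.trans h3
  have s3 : star (A*(star X)) = A*(star X) := by rw [e2]; exact h4
  have s4 : star ((star X)*A) = (star X)*A := by rw [e4]; exact h3
  exact pinv_unique s1 s2 s3 s4 h1 h2 h3 h4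

/-- A Penrose pseudoinverse of an operator `D` with `Q*D = D = D*Q` automatically
satisfies `Q*Dp = Dp = Dp*Q`. -/
lemma pinv_sand {Q D Dp : H →ₗ[𝕂] H} (hQs : star Q = Q)
    (hQD : Q*D = D) (hDQ : D*Q = D)
    (h2 : Dp*D*Dp = Dp) (h3 : star (D*Dp) = D*Dp) (h4 : star (Dp*D) = Dp*D) :
    Dp*Q = Dp ∧ Q*Dp = Dp := by
  have hDDpQ : (D*Dp)*Q = D*Dp := by
    have e : star ((D*Dp)*Q) = D*Dp := by
      rw [star_mul, hQs, h3, ← mul_assoc, hQD]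
    calc (D*Dp)*Q = star (star ((D*Dp)*Q)) := (star_star _).symm
      _ = star (D*Dp) := by rw [e]
      _ = D*Dp := h3
  have hQDpD : Q*(Dp*D) = Dp*D := by
    have e : star (Q*(Dp*D)) = Dp*D := by
      rw [star_mul, hQs, h4, mul_assoc, hDQ]
    calc Q*(Dp*D) = star (star (Q*(Dp*D))) := (star_star _).symm
      _ = star (Dp*D) := by rw [e]
      _ = Dp*D := h4
  constructor
  · calc Dp*Q = ((Dp*D)*Dp)*Q := by rw [h2]
      _ = Dp*((D*Dp)*Q) := by noncomm_ring
      _ = Dp*(D*Dp) := by rw [hDDpQ]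
      _ = Dp*D*Dp := by rw [mul_assoc]
      _ = Dp := h2
  · calc Q*Dp = Q*((Dp*D)*Dp) := by rw [h2]
      _ = (Q*(Dp*D))*Dp := by noncomm_ring
      _ = (Dp*D)*Dp := by rw [hQDpD]
      _ = Dp := h2

lemma key {P Q M G Dp : H →ₗ[𝕂] H}
    (hP : P*P = P) (hPs : star P = P) (hQs : star Q = Q)
    (hPQ : P + Q = 1) (hMs : star M = M)
    (hG1 : M*G*M = M) (hG2 : G*M*G = G) (hG3 : star (M*G) = M*G) (hG4 : star (G*M) = G*M)
    (hD1 : (Q*M*Q)*Dp*(Q*M*Q) = Q*M*Q) (hD2 : Dp*(Q*M*Q)*Dp = Dp)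
    (hD3 : star ((Q*M*Q)*Dp) = (Q*M*Q)*Dp) (hD4 : star (Dp*(Q*M*Q)) = Dp*(Q*M*Q))
    (hker1 : ∀ x, (Q*M*Q) x = 0 → (P*M*Q) x = 0)
    (hker2 : ∀ x, (P*M*P - P*M*Q*Dp*(Q*M*P)) x = 0 → (Q*M*P) x = 0) :
    (P*M*P - P*M*Q*Dp*(Q*M*P)) * (P*G*P) * (P*M*P - P*M*Q*Dp*(Q*M*P))
        = P*M*P - P*M*Q*Dp*(Q*M*P) ∧
    (P*G*P) * (P*M*P - P*M*Q*Dp*(Q*M*P)) * (P*G*P) = P*G*P ∧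
    star ((P*M*P - P*M*Q*Dp*(Q*M*P)) * (P*G*P)) = (P*M*P - P*M*Q*Dp*(Q*M*P)) * (P*G*P) ∧
    star ((P*G*P) * (P*M*P - P*M*Q*Dp*(Q*M*P))) = (P*G*P) * (P*M*P - P*M*Q*Dp*(Q*M*P)) := by
  -- abbreviations (opaque atoms)
  obtain ⟨A, hAdef⟩ : ∃ A, A = P*M*P := ⟨_, rfl⟩
  obtain ⟨B, hBdef⟩ : ∃ B, B = P*M*Q := ⟨_, rfl⟩
  obtain ⟨Bt, hBtdef⟩ : ∃ Bt, Bt = Q*M*P := ⟨_, rfl⟩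
  obtain ⟨D, hDdef⟩ : ∃ D, D = Q*M*Q := ⟨_, rfl⟩
  obtain ⟨Z, hZdef⟩ : ∃ Z, Z = A - B*Dp*Bt := ⟨_, rfl⟩
  rw [← hDdef] at hD1 hD2 hD3 hD4 hker1
  rw [← hBdef] at hker1
  rw [← hAdef, ← hBdef, ← hBtdef] at hker2
  rw [← hZdef] at hker2
  rw [← hAdef, ← hBdef, ← hBtdef, ← hZdef]
  -- basic projection facts
  have hQdef : Q = 1 - P := eq_sub_of_add_eq' hPQ
  have hQ : Q*Q = Q := by
    rw [hQdef, show (1-P)*(1-P) = 1 - P - P + P*P by noncomm_ring, hP]; abel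
  have hPQ0 : P*Q = 0 := by rw [hQdef, mul_sub, mul_one, hP, sub_self]
  have hQP0 : Q*P = 0 := by rw [hQdef, sub_mul, one_mul, hP, sub_self]
  -- absorption for blocks
  have hQD : Q*D = D := by
    rw [hDdef, show Q*(Q*M*Q) = (Q*Q)*M*Q by noncomm_ring, hQ]
  have hDQ : D*Q = D := by
    rw [hDdef, show (Q*M*Q)*Q = Q*M*(Q*Q) by noncomm_ring, hQ]
  obtain ⟨hDpQ, hQDp⟩ := pinv_sand hQs hQD hDQ hD2 hD3 hD4
  have hDpP : Dp*P = 0 := by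
    rw [← hDpQ, show Dp*Q*P = Dp*(Q*P) by noncomm_ring, hQP0, mul_zero]
  have hPDp : P*Dp = 0 := by
    rw [← hQDp, show P*(Q*Dp) = (P*Q)*Dp by noncomm_ring, hPQ0, zero_mul]
  have hPA : P*A = A := by
    rw [hAdef, show P*(P*M*P) = (P*P)*M*P by noncomm_ring, hP]
  have hAP : A*P = A := by
    rw [hAdef, show (P*M*P)*P = P*M*(P*P) by noncomm_ring, hP]
  have hPB : P*B = B := by
    rw [hBdef, show P*(P*M*Q) = (P*P)*M*Q by noncomm_ring, hP]
  have hBQ : B*Q = B := by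
    rw [hBdef, show (P*M*Q)*Q = P*M*(Q*Q) by noncomm_ring, hQ]
  have hQBt : Q*Bt = Bt := by
    rw [hBtdef, show Q*(Q*M*P) = (Q*Q)*M*P by noncomm_ring, hQ]
  have hBtP : Bt*P = Bt := by
    rw [hBtdef, show (Q*M*P)*P = Q*M*(P*P) by noncomm_ring, hP]
  have hBP : B*P = 0 := by
    rw [hBdef, show (P*M*Q)*P = P*M*(Q*P) by noncomm_ring, hQP0, mul_zero]
  have hPBt : P*Bt = 0 := by
    rw [hBtdef, show P*(Q*M*P) = (P*Q)*(M*P) by noncomm_ring, hPQ0, zero_mul]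
  have hBtQ : Bt*Q = 0 := by
    rw [hBtdef, show (Q*M*P)*Q = Q*M*(P*Q) by noncomm_ring, hPQ0, mul_zero]
  have hQB : Q*B = 0 := by
    rw [hBdef, show Q*(P*M*Q) = (Q*P)*(M*Q) by noncomm_ring, hQP0, zero_mul]
  have hDP : D*P = 0 := by
    rw [hDdef, show (Q*M*Q)*P = Q*M*(Q*P) by noncomm_ring, hQP0, mul_zero]
  have hPD : P*D = 0 := by
    rw [hDdef, show P*(Q*M*Q) = (P*Q)*(M*Q) by noncomm_ring, hPQ0, zero_mul]
  have hAQ : A*Q = 0 := by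
    rw [hAdef, show (P*M*P)*Q = P*M*(P*Q) by noncomm_ring, hPQ0, mul_zero]
  have hQA : Q*A = 0 := by
    rw [hAdef, show Q*(P*M*P) = (Q*P)*(M*P) by noncomm_ring, hQP0, zero_mul]
  -- stars
  have hsA : star A = A := by
    rw [hAdef]; simp only [star_mul, hPs, hMs, mul_assoc]
  have hsB : star B = Bt := by
    rw [hBdef, hBtdef]; simp only [star_mul, hPs, hQs, hMs, mul_assoc]
  have hsBt : star Bt = B := by
    rw [hBdef, hBtdef]; simp only [star_mul, hPs, hQs, hMs, mul_assoc]
  have hsD : star D = D := by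
    rw [hDdef]; simp only [star_mul, hQs, hMs, mul_assoc]
  have hsDp : star Dp = Dp := star_pinv hsD hD1 hD2 hD3 hD4
  have hsZ : star Z = Z := by
    have h1 : star (B*Dp*Bt) = B*Dp*Bt := by
      rw [star_mul (B*Dp) Bt, star_mul B Dp, hsBt, hsDp, hsB, mul_assoc]
    rw [hZdef, star_sub, hsA, h1]
  -- Z block relations
  have hPZ : P*Z = Z := by
    rw [hZdef, mul_sub, hPA, show P*(B*Dp*Bt) = (P*B)*Dp*Bt by noncomm_ring, hPB]
  have hZP : Z*P = Z := by
    rw [hZdef, sub_mul, hAP, show (B*Dp*Bt)*P = B*Dp*(Bt*P) by noncomm_ring, hBtP]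
  have hQZ : Q*Z = 0 := by
    rw [hZdef, mul_sub, hQA, show Q*(B*Dp*Bt) = (Q*B)*(Dp*Bt) by noncomm_ring, hQB,
      zero_mul, sub_self]
  have hZQ : Z*Q = 0 := by
    rw [hZdef, sub_mul, hAQ, show (B*Dp*Bt)*Q = B*Dp*(Bt*Q) by noncomm_ring, hBtQ,
      mul_zero, sub_self]
  have hDpZ : Dp*Z = 0 := by
    rw [← hPZ, ← mul_assoc, hDpP, zero_mul]
  have hZDp : Z*Dp = 0 := by
    rw [← hQDp, ← mul_assoc, hZQ, zero_mul]
  -- f5 and f5'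
  have f5 : B*(Dp*D) = B := by
    ext x
    have hDy : D (x - Dp (D x)) = 0 := by
      have h : D (Dp (D x)) = (D*Dp*D) x := rfl
      simp only [map_sub, h, hD1, sub_self]
    have hBy := hker1 _ hDy
    rw [map_sub, sub_eq_zero] at hBy
    simpa [Module.End.mul_apply] using hBy.symm
  have f5' : D*(Dp*Bt) = Bt := by
    have h := congrArg star f5
    rw [star_mul B (Dp*D), star_mul Dp D, hsD, hsDp, hsB, mul_assoc] at h
    exact h
  -- pseudoinverse Y of Z
  obtain ⟨Y, hY1, hY2, hY3, hY4⟩ := exists_pinv Z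
  obtain ⟨hYP, hPY⟩ := pinv_sand hPs hPZ hZP hY2 hY3 hY4
  have hsY : star Y = Y := star_pinv hsZ hY1 hY2 hY3 hY4
  have hQY : Q*Y = 0 := by rw [← hPY, ← mul_assoc, hQP0, zero_mul]
  have hYQ : Y*Q = 0 := by rw [← hYP, mul_assoc, hPQ0, mul_zero]
  have hDpY : Dp*Y = 0 := by rw [← hPY, ← mul_assoc, hDpP, zero_mul]
  have hYDp : Y*Dp = 0 := by rw [← hYP, mul_assoc, hPDp, mul_zero]
  have hYD : Y*D = 0 := by rw [← hQD, ← mul_assoc, hYQ, zero_mul]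
  have hDY : D*Y = 0 := by rw [← hPY, ← mul_assoc, hDP, zero_mul]
  have hBY : B*Y = 0 := by rw [← hPY, ← mul_assoc, hBP, zero_mul]
  have hYBt : Y*Bt = 0 := by rw [← hQBt, ← mul_assoc, hYQ, zero_mul]
  have hDpB : Dp*B = 0 := by rw [← hPB, ← mul_assoc, hDpP, zero_mul]
  have hBtDp : Bt*Dp = 0 := by rw [← hQDp, ← mul_assoc, hBtQ, zero_mul]
  -- g5 from hker2
  have hBtYZ : Bt*(Y*Z) = Bt := by
    ext x
    have hZy : Z (x - Y (Z x)) = 0 := by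
      have h : Z (Y (Z x)) = (Z*Y*Z) x := rfl
      simp only [map_sub, h, hY1, sub_self]
    have hBty := hker2 _ hZy
    rw [map_sub, sub_eq_zero] at hBty
    simpa [Module.End.mul_apply] using hBty.symm
  have g5 : Z*(Y*B) = B := by
    have h := congrArg star hBtYZ
    rw [star_mul Bt (Y*Z), star_mul Y Z, hsZ, hsY, hsBt, mul_assoc] at h
    exact h
  -- variant builders
  have V2 : ∀ {a b c : H →ₗ[𝕂] H}, a*b = c → ∀ t : H →ₗ[𝕂] H, a*(b*t) = c*t := by
    intro a b c h t; rw [← mul_assoc, h]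
  have V2z : ∀ {a b : H →ₗ[𝕂] H}, a*b = 0 → ∀ t : H →ₗ[𝕂] H, a*(b*t) = 0 := by
    intro a b h t; rw [← mul_assoc, h, zero_mul]
  have V3 : ∀ {a b c d : H →ₗ[𝕂] H}, a*(b*c) = d → ∀ t : H →ₗ[𝕂] H, a*(b*(c*t)) = d*t := by
    intro a b c d h t; rw [← mul_assoc b c t, ← mul_assoc a (b*c) t, h]
  have hD1' : D*(Dp*D) = D := by rw [← mul_assoc]; exact hD1
  have hD2' : Dp*(D*Dp) = Dp := by rw [← mul_assoc]; exact hD2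
  have hY1' : Z*(Y*Z) = Z := by rw [← mul_assoc]; exact hY1
  have hY2' : Y*(Z*Y) = Y := by rw [← mul_assoc]; exact hY2
  have vPP := V2 hP
  have vQQ := V2 hQ
  have vPQ := V2z hPQ0
  have vQP := V2z hQP0
  have vDpQ := V2 hDpQ
  have vQDp := V2 hQDp
  have vDpP := V2z hDpP
  have vPDp := V2z hPDp
  have vPA := V2 hPA
  have vAP := V2 hAP
  have vPB := V2 hPB
  have vBQ := V2 hBQ
  have vQBt := V2 hQBt
  have vBtP := V2 hBtP
  have vBP := V2z hBP
  have vPBt := V2z hPBt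
  have vBtQ := V2z hBtQ
  have vQB := V2z hQB
  have vDP := V2z hDP
  have vPD := V2z hPD
  have vAQ := V2z hAQ
  have vQA := V2z hQA
  have vPZ := V2 hPZ
  have vZP := V2 hZP
  have vQZ := V2z hQZ
  have vZQ := V2z hZQ
  have vDpZ := V2z hDpZ
  have vZDp := V2z hZDp
  have vYP := V2 hYP
  have vPY := V2 hPY
  have vQY := V2z hQY
  have vYQ := V2z hYQ
  have vDpY := V2z hDpY
  have vYDp := V2z hYDp
  have vYD := V2z hYD
  have vDY := V2z hDY
  have vBY := V2z hBY
  have vYBt := V2z hYBt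
  have vDpB := V2z hDpB
  have vBtDp := V2z hBtDp
  have vf5 := V3 f5
  have vf5' := V3 f5'
  have vg5 := V3 g5
  have vD1 := V3 hD1'
  have vD2 := V3 hD2'
  have vY1 := V3 hY1'
  have vY2 := V3 hY2'
  have vBtYZ := V3 hBtYZ
  -- decomposition of M
  have hMdec : M = Z + B*Dp*Bt + B + Bt + D := by
    have h1 : M = (P+Q)*M*(P+Q) := by rw [hPQ, one_mul, mul_one]
    have h2 : (P+Q)*M*(P+Q) = P*M*P + P*M*Q + Q*M*P + Q*M*Q := by noncomm_ring
    calc M = (P+Q)*M*(P+Q) := h1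
      _ = P*M*P + P*M*Q + Q*M*P + Q*M*Q := h2
      _ = A + B + Bt + D := by rw [← hAdef, ← hBdef, ← hBtdef, ← hDdef]
      _ = Z + B*Dp*Bt + B + Bt + D := by rw [hZdef]; abel
  -- composite identities
  have i7 : M*((1 - Dp*Bt)*((Y + Dp)*(1 - B*Dp))) = Z*Y + D*Dp := by
    conv_lhs => rw [hMdec]
    simp only [mul_add, add_mul, mul_sub, sub_mul, mul_one, one_mul, mul_assoc]
    simp only [hP, hQ, hPQ0, hQP0, hDpQ, hQDp, hDpP, hPDp, hPA, hAP, hPB, hBQ, hQBt,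
      hBtP, hBP, hPBt, hBtQ, hQB, hDP, hPD, hAQ, hQA, hPZ, hZP, hQZ, hZQ, hDpZ, hZDp,
      hYP, hPY, hQY, hYQ, hDpY, hYDp, hYD, hDY, hBY, hYBt, hDpB, hBtDp,
      f5, f5', g5, hD1', hD2', hY1', hY2', hBtYZ,
      vPP, vQQ, vPQ, vQP, vDpQ, vQDp, vDpP, vPDp, vPA, vAP, vPB, vBQ, vQBt, vBtP,
      vBP, vPBt, vBtQ, vQB, vDP, vPD, vAQ, vQA, vPZ, vZP, vQZ, vZQ, vDpZ, vZDp,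
      vYP, vPY, vQY, vYQ, vDpY, vYDp, vYD, vDY, vBY, vYBt, vDpB, vBtDp,
      vf5, vf5', vg5, vD1, vD2, vY1, vY2, vBtYZ,
      mul_zero, zero_mul, add_zero, zero_add, sub_zero, zero_sub]
    abel
  have i8 : star (Z*Y + D*Dp) = Z*Y + D*Dp := by
    rw [star_add, hY3, hD3]
  have i9 : star ((1 - Dp*Bt)*((Y + Dp)*(1 - B*Dp))) = (1 - Dp*Bt)*((Y + Dp)*(1 - B*Dp)) := by
    simp only [star_mul, star_sub, star_add, star_one, hsY, hsDp, hsB, hsBt]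
    noncomm_ring
  have i10 : ((1 - Dp*Bt)*((Y + Dp)*(1 - B*Dp)))*M = Z*Y + D*Dp := by
    have h := congrArg star i7
    rw [star_mul M ((1 - Dp*Bt)*((Y + Dp)*(1 - B*Dp))), hMs, i9, i8] at h
    exact h
  have i11 : (Z*Y + D*Dp)*M = M := by
    conv_lhs => rw [hMdec]
    conv_rhs => rw [hMdec]
    simp only [mul_add, add_mul, mul_sub, sub_mul, mul_one, one_mul, mul_assoc]
    simp only [hP, hQ, hPQ0, hQP0, hDpQ, hQDp, hDpP, hPDp, hPA, hAP, hPB, hBQ, hQBt,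
      hBtP, hBP, hPBt, hBtQ, hQB, hDP, hPD, hAQ, hQA, hPZ, hZP, hQZ, hZQ, hDpZ, hZDp,
      hYP, hPY, hQY, hYQ, hDpY, hYDp, hYD, hDY, hBY, hYBt, hDpB, hBtDp,
      f5, f5', g5, hD1', hD2', hY1', hY2', hBtYZ,
      vPP, vQQ, vPQ, vQP, vDpQ, vQDp, vDpP, vPDp, vPA, vAP, vPB, vBQ, vQBt, vBtP,
      vBP, vPBt, vBtQ, vQB, vDP, vPD, vAQ, vQA, vPZ, vZP, vQZ, vZQ, vDpZ, vZDp,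
      vYP, vPY, vQY, vYQ, vDpY, vYDp, vYD, vDY, vBY, vYBt, vDpB, vBtDp,
      vf5, vf5', vg5, vD1, vD2, vY1, vY2, vBtYZ,
      mul_zero, zero_mul, add_zero, zero_add, sub_zero, zero_sub]
  have i12 : ((1 - Dp*Bt)*((Y + Dp)*(1 - B*Dp)))*(Z*Y + D*Dp)
      = (1 - Dp*Bt)*((Y + Dp)*(1 - B*Dp)) := by
    simp only [mul_add, add_mul, mul_sub, sub_mul, mul_one, one_mul, mul_assoc]
    simp only [hP, hQ, hPQ0, hQP0, hDpQ, hQDp, hDpP, hPDp, hPA, hAP, hPB, hBQ, hQBt,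
      hBtP, hBP, hPBt, hBtQ, hQB, hDP, hPD, hAQ, hQA, hPZ, hZP, hQZ, hZQ, hDpZ, hZDp,
      hYP, hPY, hQY, hYQ, hDpY, hYDp, hYD, hDY, hBY, hYBt, hDpB, hBtDp,
      f5, f5', g5, hD1', hD2', hY1', hY2', hBtYZ,
      vPP, vQQ, vPQ, vQP, vDpQ, vQDp, vDpP, vPDp, vPA, vAP, vPB, vBQ, vQBt, vBtP,
      vBP, vPBt, vBtQ, vQB, vDP, vPD, vAQ, vQA, vPZ, vZP, vQZ, vZQ, vDpZ, vZDp,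
      vYP, vPY, vQY, vYQ, vDpY, vYDp, vYD, vDY, vBY, vYBt, vDpB, vBtDp,
      vf5, vf5', vg5, vD1, vD2, vY1, vY2, vBtYZ,
      mul_zero, zero_mul, add_zero, zero_add, sub_zero, zero_sub]
    abel
  have i12' : (Z*Y + D*Dp)*((1 - Dp*Bt)*((Y + Dp)*(1 - B*Dp)))
      = (1 - Dp*Bt)*((Y + Dp)*(1 - B*Dp)) := by
    have h := congrArg star i12
    rw [star_mul ((1 - Dp*Bt)*((Y + Dp)*(1 - B*Dp))) (Z*Y + D*Dp), i8, i9] at h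
    exact h
  have hXG : (1 - Dp*Bt)*((Y + Dp)*(1 - B*Dp)) = G := by
    refine pinv_unique ?_ ?_ ?_ ?_ hG1 hG2 hG3 hG4
    · rw [i7, i11]
    · rw [i10, i12']
    · rw [i7]; exact i8
    · rw [i10]; exact i8
  have hW : P*G*P = Y := by
    rw [← hXG]
    simp only [mul_add, add_mul, mul_sub, sub_mul, mul_one, one_mul, mul_assoc]
    simp only [hP, hQ, hPQ0, hQP0, hDpQ, hQDp, hDpP, hPDp, hPA, hAP, hPB, hBQ, hQBt,
      hBtP, hBP, hPBt, hBtQ, hQB, hDP, hPD, hAQ, hQA, hPZ, hZP, hQZ, hZQ, hDpZ, hZDp,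
      hYP, hPY, hQY, hYQ, hDpY, hYDp, hYD, hDY, hBY, hYBt, hDpB, hBtDp,
      f5, f5', g5, hD1', hD2', hY1', hY2', hBtYZ,
      vPP, vQQ, vPQ, vQP, vDpQ, vQDp, vDpP, vPDp, vPA, vAP, vPB, vBQ, vQBt, vBtP,
      vBP, vPBt, vBtQ, vQB, vDP, vPD, vAQ, vQA, vPZ, vZP, vQZ, vZQ, vDpZ, vZDp,
      vYP, vPY, vQY, vYQ, vDpY, vYDp, vYD, vDY, vBY, vYBt, vDpB, vBtDp,
      vf5, vf5', vg5, vD1, vD2, vY1, vY2, vBtYZ,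
      mul_zero, zero_mul, add_zero, zero_add, sub_zero, zero_sub]
  refine ⟨?_, ?_, ?_, ?_⟩
  · rw [hW]; exact hY1
  · rw [hW]; exact hY2
  · rw [hW]; exact hY3
  · rw [hW]; exact hY4

end ZProblemAux

/-- Duality of effective operators under relaxed hypotheses: the
Z-problem `(H, 𝒰, ℰ, 𝒥, σ)` on a finite-dimensional Hilbert space is encoded by mutually
orthogonal projections `P0, P1, P2` with sum `1` (ranges `𝒰, ℰ, 𝒥`); `σ` is self-adjoint,
`σp = σ⁺`, `B = σ₁₁⁺` and `C = ((σ⁺)₂₂)⁺` are Moore–Penrose pseudoinverses (characterized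
by the four Penrose equations).  Under hypotheses (b)–(e) of the text, the dual effective
operator `(σ⁺)₀₀ - (σ⁺)₀₂((σ⁺)₂₂)⁺(σ⁺)₂₀` is the Moore–Penrose pseudoinverse of the
effective operator `σ₀₀ - σ₀₁σ₁₁⁺σ₁₀` (stated via the four Penrose equations). -/
theorem stmt_15
    {𝕂 : Type*} [RCLike 𝕂]
    {H : Type*} [NormedAddCommGroup H] [InnerProductSpace 𝕂 H] [FiniteDimensional 𝕂 H]
    (P0 P1 P2 : H →ₗ[𝕂] H)
    (hP0 : P0 ∘ₗ P0 = P0) (hP0sa : LinearMap.adjoint P0 = P0)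
    (hP1 : P1 ∘ₗ P1 = P1) (hP1sa : LinearMap.adjoint P1 = P1)
    (hP2 : P2 ∘ₗ P2 = P2) (hP2sa : LinearMap.adjoint P2 = P2)
    (h01 : P0 ∘ₗ P1 = 0) (h02 : P0 ∘ₗ P2 = 0) (h12 : P1 ∘ₗ P2 = 0)
    (hsum : P0 + P1 + P2 = 1)
    (σ : H →ₗ[𝕂] H) (hσsa : LinearMap.adjoint σ = σ)
    -- `σp = σ⁺`, the Moore–Penrose pseudoinverse of `σ`
    (σp : H →ₗ[𝕂] H)
    (hσp1 : σp ∘ₗ (σ ∘ₗ σp) = σp) (hσp2 : σ ∘ₗ (σp ∘ₗ σ) = σ)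
    (hσp3 : LinearMap.adjoint (σp ∘ₗ σ) = σp ∘ₗ σ)
    (hσp4 : LinearMap.adjoint (σ ∘ₗ σp) = σ ∘ₗ σp)
    -- `B = σ₁₁⁺`, the Moore–Penrose pseudoinverse of `σ₁₁ = P1 σ P1`
    (B : H →ₗ[𝕂] H)
    (hB1 : B ∘ₗ ((P1 ∘ₗ (σ ∘ₗ P1)) ∘ₗ B) = B)
    (hB2 : (P1 ∘ₗ (σ ∘ₗ P1)) ∘ₗ (B ∘ₗ (P1 ∘ₗ (σ ∘ₗ P1))) = P1 ∘ₗ (σ ∘ₗ P1))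
    (hB3 : LinearMap.adjoint (B ∘ₗ (P1 ∘ₗ (σ ∘ₗ P1))) = B ∘ₗ (P1 ∘ₗ (σ ∘ₗ P1)))
    (hB4 : LinearMap.adjoint ((P1 ∘ₗ (σ ∘ₗ P1)) ∘ₗ B) = (P1 ∘ₗ (σ ∘ₗ P1)) ∘ₗ B)
    -- `C = ((σ⁺)₂₂)⁺`, the Moore–Penrose pseudoinverse of `(σ⁺)₂₂ = P2 σ⁺ P2`
    (C : H →ₗ[𝕂] H)
    (hC1 : C ∘ₗ ((P2 ∘ₗ (σp ∘ₗ P2)) ∘ₗ C) = C)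
    (hC2 : (P2 ∘ₗ (σp ∘ₗ P2)) ∘ₗ (C ∘ₗ (P2 ∘ₗ (σp ∘ₗ P2))) = P2 ∘ₗ (σp ∘ₗ P2))
    (hC3 : LinearMap.adjoint (C ∘ₗ (P2 ∘ₗ (σp ∘ₗ P2))) = C ∘ₗ (P2 ∘ₗ (σp ∘ₗ P2)))
    (hC4 : LinearMap.adjoint ((P2 ∘ₗ (σp ∘ₗ P2)) ∘ₗ C) = (P2 ∘ₗ (σp ∘ₗ P2)) ∘ₗ C)
    -- hypothesis (b): `ker σ₁₁ ⊆ ker σ₀₁ ∩ ker σ₂₁`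
    (hb : LinearMap.ker (P1 ∘ₗ (σ ∘ₗ P1)) ≤
      LinearMap.ker (P0 ∘ₗ (σ ∘ₗ P1)) ⊓ LinearMap.ker (P2 ∘ₗ (σ ∘ₗ P1)))
    -- hypothesis (c): vectors `x₀ + x₂` annihilated by all four generalized
    -- Schur-complement blocks are annihilated by `σ₁₀ ⊕ σ₁₂`
    (hc : ∀ x₀ x₂ : H, P0 x₀ = x₀ → P2 x₂ = x₂ →
      gschurLM P0 P1 σ B x₀ +
        ((P0 ∘ₗ (σ ∘ₗ P2)) - (P0 ∘ₗ (σ ∘ₗ P1)) ∘ₗ (B ∘ₗ (P1 ∘ₗ (σ ∘ₗ P2)))) x₂ = 0 →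
      ((P2 ∘ₗ (σ ∘ₗ P0)) - (P2 ∘ₗ (σ ∘ₗ P1)) ∘ₗ (B ∘ₗ (P1 ∘ₗ (σ ∘ₗ P0)))) x₀ +
        ((P2 ∘ₗ (σ ∘ₗ P2)) - (P2 ∘ₗ (σ ∘ₗ P1)) ∘ₗ (B ∘ₗ (P1 ∘ₗ (σ ∘ₗ P2)))) x₂ = 0 →
      (P1 ∘ₗ (σ ∘ₗ P0)) x₀ + (P1 ∘ₗ (σ ∘ₗ P2)) x₂ = 0)
    -- hypothesis (d): `ker (σ⁺)₂₂ ⊆ ker (σ⁺)₀₂`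
    (hd : LinearMap.ker (P2 ∘ₗ (σp ∘ₗ P2)) ≤ LinearMap.ker (P0 ∘ₗ (σp ∘ₗ P2)))
    -- hypothesis (e): `ker ((σ⁺)₀₀ - (σ⁺)₀₂((σ⁺)₂₂)⁺(σ⁺)₂₀) ⊆ ker (σ⁺)₂₀`
    (he : LinearMap.ker
        ((P0 ∘ₗ (σp ∘ₗ P0)) - (P0 ∘ₗ (σp ∘ₗ P2)) ∘ₗ (C ∘ₗ (P2 ∘ₗ (σp ∘ₗ P0)))) ≤
      LinearMap.ker (P2 ∘ₗ (σp ∘ₗ P0))) :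
    -- conclusion: the dual effective operator is the Moore–Penrose pseudoinverse of the
    -- effective operator `S = σ₀₀ - σ₀₁σ₁₁⁺σ₁₀`
    (((P0 ∘ₗ (σp ∘ₗ P0)) - (P0 ∘ₗ (σp ∘ₗ P2)) ∘ₗ (C ∘ₗ (P2 ∘ₗ (σp ∘ₗ P0)))) ∘ₗ
        (gschurLM P0 P1 σ B ∘ₗ
          ((P0 ∘ₗ (σp ∘ₗ P0)) - (P0 ∘ₗ (σp ∘ₗ P2)) ∘ₗ (C ∘ₗ (P2 ∘ₗ (σp ∘ₗ P0))))) =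
      (P0 ∘ₗ (σp ∘ₗ P0)) - (P0 ∘ₗ (σp ∘ₗ P2)) ∘ₗ (C ∘ₗ (P2 ∘ₗ (σp ∘ₗ P0)))) ∧
    (gschurLM P0 P1 σ B ∘ₗ
        (((P0 ∘ₗ (σp ∘ₗ P0)) - (P0 ∘ₗ (σp ∘ₗ P2)) ∘ₗ (C ∘ₗ (P2 ∘ₗ (σp ∘ₗ P0)))) ∘ₗ
          gschurLM P0 P1 σ B) =
      gschurLM P0 P1 σ B) ∧
    (LinearMap.adjoint
        ((((P0 ∘ₗ (σp ∘ₗ P0)) - (P0 ∘ₗ (σp ∘ₗ P2)) ∘ₗ (C ∘ₗ (P2 ∘ₗ (σp ∘ₗ P0))))) ∘ₗ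
          gschurLM P0 P1 σ B) =
      (((P0 ∘ₗ (σp ∘ₗ P0)) - (P0 ∘ₗ (σp ∘ₗ P2)) ∘ₗ (C ∘ₗ (P2 ∘ₗ (σp ∘ₗ P0))))) ∘ₗ
        gschurLM P0 P1 σ B) ∧
    (LinearMap.adjoint
        (gschurLM P0 P1 σ B ∘ₗ
          (((P0 ∘ₗ (σp ∘ₗ P0)) - (P0 ∘ₗ (σp ∘ₗ P2)) ∘ₗ (C ∘ₗ (P2 ∘ₗ (σp ∘ₗ P0)))))) =
      gschurLM P0 P1 σ B ∘ₗ
        (((P0 ∘ₗ (σp ∘ₗ P0)) - (P0 ∘ₗ (σp ∘ₗ P2)) ∘ₗ (C ∘ₗ (P2 ∘ₗ (σp ∘ₗ P0)))))) := by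
  classical
  -- move to star/mul language
  simp only [← LinearMap.star_eq_adjoint] at hP0sa hP1sa hP2sa hσsa hσp3 hσp4 hB3 hB4 hC3 hC4
  simp only [← Module.End.mul_eq_comp] at hP0 hP1 hP2 h01 h02 h12 hσp1 hσp2 hσp3 hσp4 hB1 hB2 hB3 hB4 hC1 hC2 hC3 hC4
  simp only [gschurLM, ← LinearMap.star_eq_adjoint, ← Module.End.mul_eq_comp]
  -- basic products
  have hP2P0 : P2*P0 = 0 := by
    have h := congrArg star h02
    rwa [star_mul, hP0sa, hP2sa, star_zero] at h
  have hP1P0 : P1*P0 = 0 := by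
    have h := congrArg star h01
    rwa [star_mul, hP0sa, hP1sa, star_zero] at h
  have hP2P1 : P2*P1 = 0 := by
    have h := congrArg star h12
    rwa [star_mul, hP1sa, hP2sa, star_zero] at h
  -- variant builders for the projection algebra
  have V2 : ∀ {a b c : H →ₗ[𝕂] H}, a*b = c → ∀ t : H →ₗ[𝕂] H, a*(b*t) = c*t := by
    intro a b c h t; rw [← mul_assoc, h]
  have V2z : ∀ {a b : H →ₗ[𝕂] H}, a*b = 0 → ∀ t : H →ₗ[𝕂] H, a*(b*t) = 0 := by
    intro a b h t; rw [← mul_assoc, h, zero_mul]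
  have v00 := V2 hP0
  have v11 := V2 hP1
  have v22 := V2 hP2
  have v01 := V2z h01
  have v02 := V2z h02
  have v12 := V2z h12
  have v10 := V2z hP1P0
  have v20 := V2z hP2P0
  have v21 := V2z hP2P1
  -- Γ facts
  have hsΓ : star (P0+P2) = P0+P2 := by rw [star_add, hP0sa, hP2sa]
  have hΓ : (P0+P2)*(P0+P2) = P0+P2 := by
    simp only [add_mul, mul_add, hP0, hP2, h02, hP2P0, add_zero, zero_add]
  have hΓ1 : (P0+P2) + P1 = 1 := by rw [← hsum]; abel
  -- reshaped B-Penrose hypotheses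
  have hd1 : (P1*σ*P1)*B*(P1*σ*P1) = P1*σ*P1 := by
    simp only [← mul_assoc] at hB2 ⊢; exact hB2
  have hd2 : B*(P1*σ*P1)*B = B := by
    simp only [← mul_assoc] at hB1 ⊢; exact hB1
  have hd3 : star ((P1*σ*P1)*B) = (P1*σ*P1)*B := by
    simp only [← mul_assoc] at hB4 ⊢; exact hB4
  have hd4 : star (B*(P1*σ*P1)) = B*(P1*σ*P1) := by
    simp only [← mul_assoc] at hB3 ⊢; exact hB3
  have hg1 : σ*σp*σ = σ := by rw [mul_assoc]; exact hσp2
  have hg2 : σp*σ*σp = σp := by rw [mul_assoc]; exact hσp1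
  -- kernel condition 1 for the first application
  have hk1 : ∀ x, (P1*σ*P1) x = 0 → ((P0+P2)*σ*P1) x = 0 := by
    intro x hx
    have hx' : x ∈ LinearMap.ker (P1 ∘ₗ (σ ∘ₗ P1)) := LinearMap.mem_ker.mpr hx
    obtain ⟨h1', h2'⟩ := hb hx'
    have h1 := LinearMap.mem_ker.mp h1'
    have h2 := LinearMap.mem_ker.mp h2'
    have e : ((P0+P2)*σ*P1) x = (P0 ∘ₗ (σ ∘ₗ P1)) x + (P2 ∘ₗ (σ ∘ₗ P1)) x := by
      simp [Module.End.mul_apply, LinearMap.add_apply, LinearMap.comp_apply]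
    rw [e, h1, h2, add_zero]
  -- operator identities for hc
  have EA : (P0*(σ*P0) - (P0*(σ*P1))*(B*(P1*(σ*P0))))*P0 +
      ((P0*(σ*P2)) - (P0*(σ*P1))*(B*(P1*(σ*P2))))*P2 =
      P0*((P0+P2)*σ*(P0+P2) - (P0+P2)*σ*P1*B*(P1*σ*(P0+P2))) := by
    simp only [mul_add, add_mul, mul_sub, sub_mul, mul_assoc]
    simp only [hP0, hP1, hP2, h01, h02, h12, hP1P0, hP2P0, hP2P1,
      v00, v11, v22, v01, v02, v12, v10, v20, v21,
      mul_zero, zero_mul, add_zero, zero_add, sub_zero, zero_sub]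
    abel
  have EB : ((P2*(σ*P0)) - (P2*(σ*P1))*(B*(P1*(σ*P0))))*P0 +
      ((P2*(σ*P2)) - (P2*(σ*P1))*(B*(P1*(σ*P2))))*P2 =
      P2*((P0+P2)*σ*(P0+P2) - (P0+P2)*σ*P1*B*(P1*σ*(P0+P2))) := by
    simp only [mul_add, add_mul, mul_sub, sub_mul, mul_assoc]
    simp only [hP0, hP1, hP2, h01, h02, h12, hP1P0, hP2P0, hP2P1,
      v00, v11, v22, v01, v02, v12, v10, v20, v21,
      mul_zero, zero_mul, add_zero, zero_add, sub_zero, zero_sub]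
    abel
  have EC : (P1*(σ*P0))*P0 + (P1*(σ*P2))*P2 = P1*σ*(P0+P2) := by
    simp only [mul_add, add_mul, mul_assoc]
    simp only [hP0, hP1, hP2, h01, h02, h12, hP1P0, hP2P0, hP2P1,
      v00, v11, v22, v01, v02, v12, v10, v20, v21,
      mul_zero, zero_mul, add_zero, zero_add, sub_zero, zero_sub]
  -- kernel condition 2 for the first application
  have hk2 : ∀ x, ((P0+P2)*σ*(P0+P2) - (P0+P2)*σ*P1*B*(P1*σ*(P0+P2))) x = 0 →
      (P1*σ*(P0+P2)) x = 0 := by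
    intro x hx
    have h00 : P0 (P0 x) = P0 x := by rw [← Module.End.mul_apply, hP0]
    have h22 : P2 (P2 x) = P2 x := by rw [← Module.End.mul_apply, hP2]
    have prem1 : gschurLM P0 P1 σ B (P0 x) +
        ((P0 ∘ₗ (σ ∘ₗ P2)) - (P0 ∘ₗ (σ ∘ₗ P1)) ∘ₗ (B ∘ₗ (P1 ∘ₗ (σ ∘ₗ P2)))) (P2 x) = 0 := by
      have hEA := LinearMap.congr_fun EA x
      simp only [Module.End.mul_apply, LinearMap.add_apply] at hEA
      have : gschurLM P0 P1 σ B (P0 x) +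
          ((P0 ∘ₗ (σ ∘ₗ P2)) - (P0 ∘ₗ (σ ∘ₗ P1)) ∘ₗ (B ∘ₗ (P1 ∘ₗ (σ ∘ₗ P2)))) (P2 x) =
          P0 (((P0+P2)*σ*(P0+P2) - (P0+P2)*σ*P1*B*(P1*σ*(P0+P2))) x) := by
        simpa [gschurLM, Module.End.mul_apply, LinearMap.sub_apply, LinearMap.comp_apply]
          using hEA
      rw [this, hx, map_zero]
    have prem2 : ((P2 ∘ₗ (σ ∘ₗ P0)) - (P2 ∘ₗ (σ ∘ₗ P1)) ∘ₗ (B ∘ₗ (P1 ∘ₗ (σ ∘ₗ P0)))) (P0 x) +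
        ((P2 ∘ₗ (σ ∘ₗ P2)) - (P2 ∘ₗ (σ ∘ₗ P1)) ∘ₗ (B ∘ₗ (P1 ∘ₗ (σ ∘ₗ P2)))) (P2 x) = 0 := by
      have hEB := LinearMap.congr_fun EB x
      simp only [Module.End.mul_apply, LinearMap.add_apply] at hEB
      have : ((P2 ∘ₗ (σ ∘ₗ P0)) - (P2 ∘ₗ (σ ∘ₗ P1)) ∘ₗ (B ∘ₗ (P1 ∘ₗ (σ ∘ₗ P0)))) (P0 x) +
          ((P2 ∘ₗ (σ ∘ₗ P2)) - (P2 ∘ₗ (σ ∘ₗ P1)) ∘ₗ (B ∘ₗ (P1 ∘ₗ (σ ∘ₗ P2)))) (P2 x) =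
          P2 (((P0+P2)*σ*(P0+P2) - (P0+P2)*σ*P1*B*(P1*σ*(P0+P2))) x) := by
        simpa [Module.End.mul_apply, LinearMap.sub_apply, LinearMap.comp_apply] using hEB
      rw [this, hx, map_zero]
    have hfin := hc (P0 x) (P2 x) h00 h22 prem1 prem2
    have hECx := LinearMap.congr_fun EC x
    rw [show (P1*σ*(P0+P2)) x = ((P1*(σ*P0))*P0 + (P1*(σ*P2))*P2) x from hECx.symm]
    simpa [Module.End.mul_apply, LinearMap.comp_apply, LinearMap.add_apply] using hfin
  -- first application of key
  obtain ⟨c1, c2, c3, c4⟩ := key hΓ hsΓ hP1sa hΓ1 hσsa hg1 hg2 hσp4 hσp3 hd1 hd2 hd3 hd4 hk1 hk2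
  -- σp and W1 self-adjoint
  have hσps : star σp = σp := star_pinv hσsa hg1 hg2 hσp4 hσp3
  have hsW1 : star ((P0+P2)*σp*(P0+P2)) = (P0+P2)*σp*(P0+P2) := by
    simp only [star_mul, star_add, hP0sa, hP2sa, hσps]
    noncomm_ring
  have hQs2 : star (P1+P2) = P1+P2 := by rw [star_add, hP1sa, hP2sa]
  have hPQ2 : P0 + (P1+P2) = 1 := by rw [← hsum]; abel
  -- block identities for W1
  have ED1 : (P1+P2)*((P0+P2)*σp*(P0+P2))*(P1+P2) = P2*σp*P2 := by
    simp only [mul_add, add_mul, mul_assoc]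
    simp only [hP0, hP1, hP2, h01, h02, h12, hP1P0, hP2P0, hP2P1,
      v00, v11, v22, v01, v02, v12, v10, v20, v21,
      mul_zero, zero_mul, add_zero, zero_add]
  have ED2 : P0*((P0+P2)*σp*(P0+P2))*(P1+P2) = P0*σp*P2 := by
    simp only [mul_add, add_mul, mul_assoc]
    simp only [hP0, hP1, hP2, h01, h02, h12, hP1P0, hP2P0, hP2P1,
      v00, v11, v22, v01, v02, v12, v10, v20, v21,
      mul_zero, zero_mul, add_zero, zero_add]
  have ED3 : P0*((P0+P2)*σp*(P0+P2))*P0 = P0*σp*P0 := by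
    simp only [mul_add, add_mul, mul_assoc]
    simp only [hP0, hP1, hP2, h01, h02, h12, hP1P0, hP2P0, hP2P1,
      v00, v11, v22, v01, v02, v12, v10, v20, v21,
      mul_zero, zero_mul, add_zero, zero_add]
  have ED4 : (P1+P2)*((P0+P2)*σp*(P0+P2))*P0 = P2*σp*P0 := by
    simp only [mul_add, add_mul, mul_assoc]
    simp only [hP0, hP1, hP2, h01, h02, h12, hP1P0, hP2P0, hP2P1,
      v00, v11, v22, v01, v02, v12, v10, v20, v21,
      mul_zero, zero_mul, add_zero, zero_add]
  -- C-Penrose reshaped for the block of W1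
  have hd1C : ((P1+P2)*((P0+P2)*σp*(P0+P2))*(P1+P2))*C*((P1+P2)*((P0+P2)*σp*(P0+P2))*(P1+P2))
      = (P1+P2)*((P0+P2)*σp*(P0+P2))*(P1+P2) := by
    rw [ED1]
    simp only [← mul_assoc] at hC2 ⊢; exact hC2
  have hd2C : C*((P1+P2)*((P0+P2)*σp*(P0+P2))*(P1+P2))*C = C := by
    rw [ED1]
    simp only [← mul_assoc] at hC1 ⊢; exact hC1
  have hd3C : star (((P1+P2)*((P0+P2)*σp*(P0+P2))*(P1+P2))*C)
      = ((P1+P2)*((P0+P2)*σp*(P0+P2))*(P1+P2))*C := by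
    rw [ED1]
    simp only [← mul_assoc] at hC4 ⊢; exact hC4
  have hd4C : star (C*((P1+P2)*((P0+P2)*σp*(P0+P2))*(P1+P2)))
      = C*((P1+P2)*((P0+P2)*σp*(P0+P2))*(P1+P2)) := by
    rw [ED1]
    simp only [← mul_assoc] at hC3 ⊢; exact hC3
  -- kernel conditions for the second application
  have hk1C : ∀ x, ((P1+P2)*((P0+P2)*σp*(P0+P2))*(P1+P2)) x = 0 →
      (P0*((P0+P2)*σp*(P0+P2))*(P1+P2)) x = 0 := by
    intro x hx
    have hx2 : (P2*σp*P2) x = 0 := by rw [← ED1]; exact hx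
    have h1 := LinearMap.mem_ker.mp (hd (LinearMap.mem_ker.mpr hx2))
    rw [ED2]
    exact h1
  have hk2C : ∀ x, (P0*((P0+P2)*σp*(P0+P2))*P0 -
        P0*((P0+P2)*σp*(P0+P2))*(P1+P2)*C*((P1+P2)*((P0+P2)*σp*(P0+P2))*P0)) x = 0 →
      ((P1+P2)*((P0+P2)*σp*(P0+P2))*P0) x = 0 := by
    intro x hx
    have hEq : P0*((P0+P2)*σp*(P0+P2))*P0 -
        P0*((P0+P2)*σp*(P0+P2))*(P1+P2)*C*((P1+P2)*((P0+P2)*σp*(P0+P2))*P0)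
        = P0*σp*P0 - P0*σp*P2*C*(P2*σp*P0) := by
      rw [ED3, ED2, ED4]
    have hx2 : ((P0 ∘ₗ (σp ∘ₗ P0)) - (P0 ∘ₗ (σp ∘ₗ P2)) ∘ₗ (C ∘ₗ (P2 ∘ₗ (σp ∘ₗ P0)))) x = 0 := by
      have h := hx
      rw [hEq] at h
      simpa [LinearMap.sub_apply, Module.End.mul_apply, LinearMap.comp_apply] using h
    have h1 := LinearMap.mem_ker.mp (he (LinearMap.mem_ker.mpr hx2))
    rw [ED4]
    exact h1
  -- second application of key
  obtain ⟨k1, k2, k3, k4⟩ := key (P := P0) (Q := P1+P2)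
    (M := (P0+P2)*σp*(P0+P2))
    (G := (P0+P2)*σ*(P0+P2) - (P0+P2)*σ*P1*B*(P1*σ*(P0+P2))) (Dp := C)
    hP0 hP0sa hQs2 hPQ2 hsW1 c2 c1 c4 c3 hd1C hd2C hd3C hd4C hk1C hk2C
  -- identify the effective operators
  have FZ : P0*((P0+P2)*σp*(P0+P2))*P0 -
      P0*((P0+P2)*σp*(P0+P2))*(P1+P2)*C*((P1+P2)*((P0+P2)*σp*(P0+P2))*P0)
      = P0*σp*P0 - P0*σp*P2*C*(P2*σp*P0) := by
    rw [ED3, ED2, ED4]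
  have FS : P0*((P0+P2)*σ*(P0+P2) - (P0+P2)*σ*P1*B*(P1*σ*(P0+P2)))*P0
      = P0*σ*P0 - P0*σ*P1*B*(P1*σ*P0) := by
    simp only [mul_sub, sub_mul, mul_add, add_mul, mul_assoc]
    simp only [hP0, hP1, hP2, h01, h02, h12, hP1P0, hP2P0, hP2P1,
      v00, v11, v22, v01, v02, v12, v10, v20, v21,
      mul_zero, zero_mul, add_zero, zero_add, sub_zero, zero_sub]
  rw [FZ, FS] at k1 k2 k3 k4
  simp only [← mul_assoc] at k1 k2 k3 k4 ⊢
  exact ⟨k1, k2, k3, k4⟩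
end
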